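/- arXiv:1704.06823 — 5 statements merged into one kernel-verified Lean document; each statement's English description precedes it below -/
import Mathlib

section
/- Fix positive integers l and i with 0 ≤ i ≤ l−1, and for s ∈ {0,1,…,2^i−1} define f(s) = (2^i + s + 1) · Σ_{j = 2^l + 2^{l−i−1}(2s+1)}^{2^l − 1 + 2^{l−i−1}(2s+2)} 1/j. Then f is strictly decreasing in s. -/
/-- f(s) = (2^i + s + 1) · Σ_{j = 2^l + 2^{l-i-1}(2s+1)}^{2^l - 1 + 2^{l-i-1}(2s+2)} 1/j -/
noncomputable def f (l i s : ℕ) : ℝ :=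
  ((2 : ℝ) ^ i + s + 1) *
    ∑ j ∈ Finset.Icc (2 ^ l + 2 ^ (l - i - 1) * (2 * s + 1))
        (2 ^ l - 1 + 2 ^ (l - i - 1) * (2 * s + 2)), (1 : ℝ) / j

theorem f_strictAnti (l i : ℕ) (hl : 1 ≤ l) (hi : i ≤ l - 1) :
    ∀ s : ℕ, s + 1 ≤ 2 ^ i - 1 → f l i (s + 1) < f l i s := by
  intro s _
  have hD : 1 ≤ 2 ^ (l - i - 1) := Nat.one_le_two_pow
  have hL : 1 ≤ 2 ^ l := Nat.one_le_two_pow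
  have hkey : 2 * 2 ^ (l - i - 1) * 2 ^ i = 2 ^ l := by
    rw [show (2:ℕ) * 2 ^ (l - i - 1) * 2 ^ i = 2 ^ (1 + (l - i - 1) + i) by
      rw [pow_add, pow_add, pow_one]]
    congr 1
    omega
  set D := 2 ^ (l - i - 1) with hDdef
  unfold f
  rw [← Finset.Ico_add_one_right_eq_Icc, ← Finset.Ico_add_one_right_eq_Icc,
    Finset.sum_Ico_eq_sum_range, Finset.sum_Ico_eq_sum_range]
  have e1 : D * (2 * s + 2) = D * (2 * s + 1) + D := by ring
  have e2 : D * (2 * (s + 1) + 1) = D * (2 * s + 1) + 2 * D := by ring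
  have e3 : D * (2 * (s + 1) + 2) = D * (2 * s + 1) + 3 * D := by ring
  set X := D * (2 * s + 1) with hXdef
  have h1 : 2 ^ l - 1 + D * (2 * s + 2) + 1 - (2 ^ l + X) = D := by omega
  have h2 : 2 ^ l - 1 + D * (2 * (s + 1) + 2) + 1 - (2 ^ l + D * (2 * (s + 1) + 1)) = D := by
    omega
  rw [h1, h2, e2, Finset.mul_sum, Finset.mul_sum]
  apply Finset.sum_lt_sum_of_nonempty
  · exact Finset.nonempty_range_iff.mpr (by omega)
  intro k hk
  have hk' : k < D := Finset.mem_range.mp hk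
  have hd1 : (0:ℝ) < ((2 ^ l + X + k : ℕ) : ℝ) := by
    have : 0 < 2 ^ l + X + k := by omega
    exact_mod_cast this
  have hd2 : (0:ℝ) < ((2 ^ l + (X + 2 * D) + k : ℕ) : ℝ) := by
    have : 0 < 2 ^ l + (X + 2 * D) + k := by omega
    exact_mod_cast this
  rw [mul_one_div, mul_one_div, div_lt_div_iff₀ hd2 hd1]
  have hkeyR : (2:ℝ) * D * 2 ^ i = 2 ^ l := by exact_mod_cast hkey
  have hXR : (X:ℝ) = 2 * (D:ℝ) * s + D := by
    rw [hXdef]; push_cast; ring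
  have hkR : (k:ℝ) < D := by exact_mod_cast hk'
  push_cast
  nlinarith [hkeyR, hXR, hkR]
end

section
/- For every n ≥ 1 the radius r* = 1/(3 + √(2√3 n)) satisfies both (2⌈√(√3·n/2)⌉ + 1) r* ≤ 1 and (√3(⌈√(2n/√3)⌉ − 1) + 2) r* ≤ 1. -/
theorem hexagonal_packing_radius_fits (n : ℕ) (hn : 1 ≤ n) :
    (2 * (⌈Real.sqrt (Real.sqrt 3 * n / 2)⌉₊ : ℝ) + 1) *
        (1 / (3 + Real.sqrt (2 * Real.sqrt 3 * n))) ≤ 1 ∧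
      (Real.sqrt 3 * ((⌈Real.sqrt (2 * n / Real.sqrt 3)⌉₊ : ℝ) - 1) + 2) *
        (1 / (3 + Real.sqrt (2 * Real.sqrt 3 * n))) ≤ 1 := by
  set s := Real.sqrt (2 * Real.sqrt 3 * n) with hs
  have hs0 : 0 ≤ s := Real.sqrt_nonneg _
  have h3 : (0:ℝ) < Real.sqrt 3 := Real.sqrt_pos.mpr (by norm_num)
  have hden : (0:ℝ) < 3 + s := by linarith
  have h4 : Real.sqrt 4 = 2 := by
    rw [show (4:ℝ) = 2^2 by norm_num, Real.sqrt_sq (by norm_num)]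
  have h33 : Real.sqrt 3 * Real.sqrt 3 = 3 := Real.mul_self_sqrt (by norm_num)
  have hn0 : (0:ℝ) ≤ (n:ℝ) := Nat.cast_nonneg n
  have h1 : Real.sqrt (Real.sqrt 3 * n / 2) = s / 2 := by
    rw [show Real.sqrt 3 * n / 2 = (2 * Real.sqrt 3 * n) / 4 by ring,
      Real.sqrt_div (by positivity), h4, hs]
  have h2 : Real.sqrt (2 * n / Real.sqrt 3) = s / Real.sqrt 3 := by
    have : (2:ℝ) * n / Real.sqrt 3 = (2 * Real.sqrt 3 * n) / 3 := by
      field_simp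
      nlinarith [h33]
    rw [this, Real.sqrt_div (by positivity), hs]
  have hc1 : (⌈Real.sqrt (Real.sqrt 3 * n / 2)⌉₊ : ℝ) ≤ s / 2 + 1 := by
    rw [h1]; exact (Nat.ceil_lt_add_one (by positivity)).le
  have hc2 : (⌈Real.sqrt (2 * n / Real.sqrt 3)⌉₊ : ℝ) ≤ s / Real.sqrt 3 + 1 := by
    rw [h2]; exact (Nat.ceil_lt_add_one (by positivity)).le
  constructor
  · rw [mul_one_div, div_le_one hden]
    linarith
  · rw [mul_one_div, div_le_one hden]
    have key : Real.sqrt 3 * ((⌈Real.sqrt (2 * n / Real.sqrt 3)⌉₊ : ℝ) - 1)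
        ≤ Real.sqrt 3 * (s / Real.sqrt 3) := by
      apply mul_le_mul_of_nonneg_left (by linarith) h3.le
    have : Real.sqrt 3 * (s / Real.sqrt 3) = s := by
      field_simp
    linarith
end

section
/- Let δ(r) = ⌊3r − 4√(r/(2√3)) + 1/(2√3)⌋. Then lim_{r→∞} Σ_{i=1}^{δ(r)} π·(1/(2 + √(2√3 r)))² = √3·π/2. -/
open Filter Real

private lemma sqrt_tendsto_atTop : Tendsto Real.sqrt atTop atTop := by
  apply tendsto_atTop_atTop.mpr
  intro b
  exact ⟨b ^ 2, fun a ha => le_trans (le_abs_self b)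
    (by rw [← Real.sqrt_sq_eq_abs]; exact Real.sqrt_le_sqrt ha)⟩

private lemma tendsto_aux (k : ℝ) :
    Tendsto (fun r : ℝ => π * (3 * r - 4 * Real.sqrt (r / (2 * Real.sqrt 3)) + k)
        * (1 / (2 + Real.sqrt (2 * Real.sqrt 3 * r))) ^ 2) atTop
      (nhds (Real.sqrt 3 * π / 2)) := by
  have h3 : (0:ℝ) < Real.sqrt 3 := Real.sqrt_pos.mpr (by norm_num)
  have h33 : Real.sqrt 3 * Real.sqrt 3 = 3 := Real.mul_self_sqrt (by norm_num)
  set c := Real.sqrt (2 * Real.sqrt 3) with hc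
  have hc0 : 0 < c := Real.sqrt_pos.mpr (by positivity)
  have hcsq : c ^ 2 = 2 * Real.sqrt 3 := Real.sq_sqrt (by positivity)
  have hinv : Tendsto (fun r : ℝ => (Real.sqrt r)⁻¹) atTop (nhds 0) :=
    sqrt_tendsto_atTop.inv_tendsto_atTop
  have hinv2 : Tendsto (fun r : ℝ => r⁻¹) atTop (nhds 0) := tendsto_inv_atTop_zero
  have hmain : Tendsto (fun r : ℝ =>
      π * (3 - (4 / c) * (Real.sqrt r)⁻¹ + k * r⁻¹)
        * (1 / (2 * (Real.sqrt r)⁻¹ + c)) ^ 2) atTop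
      (nhds (π * (3 - (4 / c) * 0 + k * 0) * (1 / (2 * 0 + c)) ^ 2)) := by
    apply Tendsto.mul
    · exact ((tendsto_const_nhds.sub ((tendsto_const_nhds).mul hinv)).add
        ((tendsto_const_nhds).mul hinv2)).const_mul π
    · apply Tendsto.pow
      apply Tendsto.div tendsto_const_nhds (((tendsto_const_nhds).mul hinv).add tendsto_const_nhds)
      simpa using hc0.ne'
  have hval : π * (3 - (4 / c) * 0 + k * 0) * (1 / (2 * 0 + c)) ^ 2
      = Real.sqrt 3 * π / 2 := by
    simp only [mul_zero, sub_zero, add_zero, zero_add]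
    rw [one_div, inv_pow, hcsq]
    field_simp
    linear_combination (-1 : ℝ) * (Real.sq_sqrt (by norm_num : (0:ℝ) ≤ 3))
  rw [hval] at hmain
  apply hmain.congr'
  filter_upwards [eventually_ge_atTop (1:ℝ)] with r hr
  have hr0 : (0:ℝ) < r := by linarith
  obtain ⟨s, hs0, rfl⟩ : ∃ s : ℝ, 0 < s ∧ s ^ 2 = r :=
    ⟨Real.sqrt r, Real.sqrt_pos.mpr hr0, Real.sq_sqrt hr0.le⟩
  have hss : Real.sqrt (s ^ 2) = s := Real.sqrt_sq hs0.le
  have h1 : Real.sqrt (2 * Real.sqrt 3 * s ^ 2) = c * s := by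
    rw [Real.sqrt_mul (by positivity), hss, ← hc]
  have h2 : Real.sqrt (s ^ 2 / (2 * Real.sqrt 3)) = s / c := by
    rw [Real.sqrt_div (by positivity), hss, ← hc]
  have hd : (2 + c * s) ≠ 0 := by positivity
  have hd2 : (2 * s⁻¹ + c) ≠ 0 := by positivity
  simp only [hss, h1, h2]
  field_simp

theorem limit_third_term :
    Tendsto
      (fun r : ℝ =>
        ∑ _i ∈ Finset.Icc (1 : ℤ)
            ⌊3 * r - 4 * Real.sqrt (r / (2 * Real.sqrt 3)) + 1 / (2 * Real.sqrt 3)⌋,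
          π * (1 / (2 + Real.sqrt (2 * Real.sqrt 3 * r))) ^ 2)
      atTop (nhds (Real.sqrt 3 * π / 2)) := by
  have h3 : (0:ℝ) < Real.sqrt 3 := Real.sqrt_pos.mpr (by norm_num)
  apply tendsto_of_tendsto_of_tendsto_of_le_of_le'
    (tendsto_aux (1 / (2 * Real.sqrt 3) - 1)) (tendsto_aux (1 / (2 * Real.sqrt 3)))
  all_goals
    filter_upwards [eventually_ge_atTop (2:ℝ)] with r hr
  all_goals
    have hr0 : (0:ℝ) < r := by linarith
    have hs0 : 0 < Real.sqrt r := Real.sqrt_pos.mpr hr0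
    have hsq : Real.sqrt r ^ 2 = r := Real.sq_sqrt hr0.le
    have hsle : Real.sqrt (r / (2 * Real.sqrt 3)) ≤ Real.sqrt r := by
      apply Real.sqrt_le_sqrt
      rw [div_le_iff₀ (by positivity)]
      nlinarith [Real.sq_sqrt (by norm_num : (0:ℝ) ≤ 3), h3]
    have h4r : 4 * Real.sqrt r ≤ 3 * r := by nlinarith [hsq, hs0]
    have hY : 0 < 1 / (2 * Real.sqrt 3) := by positivity
    have hgnn : 0 ≤ 3 * r - 4 * Real.sqrt (r / (2 * Real.sqrt 3)) + 1 / (2 * Real.sqrt 3) := by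
      linarith
    set g : ℝ := 3 * r - 4 * Real.sqrt (r / (2 * Real.sqrt 3)) + 1 / (2 * Real.sqrt 3) with hg
    have h0 : (0:ℤ) ≤ ⌊g⌋ := Int.floor_nonneg.mpr hgnn
    have hcard : ((Finset.Icc (1:ℤ) ⌊g⌋).card : ℝ) = (⌊g⌋ : ℝ) := by
      have he : (⌊g⌋ + 1 - 1) = ⌊g⌋ := by ring
      rw [Int.card_Icc, he]
      exact_mod_cast congrArg (Int.cast : ℤ → ℝ) (Int.toNat_of_nonneg h0)
    have hconst : 0 ≤ π * (1 / (2 + Real.sqrt (2 * Real.sqrt 3 * r))) ^ 2 := by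
      positivity
    rw [Finset.sum_const, nsmul_eq_mul]
  · -- lower bound
    have hlow : g - 1 ≤ (⌊g⌋ : ℝ) := by
      have := Int.sub_one_lt_floor g
      linarith
    calc π * (3 * r - 4 * Real.sqrt (r / (2 * Real.sqrt 3)) + (1 / (2 * Real.sqrt 3) - 1))
          * (1 / (2 + Real.sqrt (2 * Real.sqrt 3 * r))) ^ 2
        = (g - 1) * (π * (1 / (2 + Real.sqrt (2 * Real.sqrt 3 * r))) ^ 2) := by rw [hg]; ring
      _ ≤ (⌊g⌋ : ℝ) * (π * (1 / (2 + Real.sqrt (2 * Real.sqrt 3 * r))) ^ 2) :=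
          mul_le_mul_of_nonneg_right hlow hconst
      _ = ((Finset.Icc (1:ℤ) ⌊g⌋).card : ℝ) * (π * (1 / (2 + Real.sqrt (2 * Real.sqrt 3 * r))) ^ 2) := by
          rw [hcard]
  · -- upper bound
    have hup : (⌊g⌋ : ℝ) ≤ g := Int.floor_le g
    calc ((Finset.Icc (1:ℤ) ⌊g⌋).card : ℝ) * (π * (1 / (2 + Real.sqrt (2 * Real.sqrt 3 * r))) ^ 2)
        = (⌊g⌋ : ℝ) * (π * (1 / (2 + Real.sqrt (2 * Real.sqrt 3 * r))) ^ 2) := by rw [hcard]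
      _ ≤ g * (π * (1 / (2 + Real.sqrt (2 * Real.sqrt 3 * r))) ^ 2) :=
          mul_le_mul_of_nonneg_right hup hconst
      _ = π * (3 * r - 4 * Real.sqrt (r / (2 * Real.sqrt 3)) + 1 / (2 * Real.sqrt 3))
          * (1 / (2 + Real.sqrt (2 * Real.sqrt 3 * r))) ^ 2 := by rw [hg]; ring
end

section
/- Let P be a k-dimensional polytope, let p₁,…,pₙ ∈ P, and let Disp(n;P) be the optimal dispersion distance for n points in P. Then there exists a point p ∈ P with min_{i∈[n]} min{dis(p,p_i), dis(p,∂P)} ≥ Disp(n;P)/2. -/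
open Metric MeasureTheory Set Filter Topology

/-- `disp k n P`: the optimal dispersion distance for `n` points in `P ⊆ ℝᵏ`. -/
noncomputable def disp (k n : ℕ) (P : Set (EuclideanSpace ℝ (Fin k))) : ℝ :=
  sSup {d : ℝ | ∃ X : Fin n → EuclideanSpace ℝ (Fin k),
    (∀ i, X i ∈ P) ∧ (∀ i, d ≤ Metric.infDist (X i) (frontier P)) ∧
      ∀ i j, i ≠ j → d ≤ dist (X i) (X j)}

section Aux

variable {E : Type*} [NormedAddCommGroup E] [NormedSpace ℝ E]

/-- A segment from a point of `P` to a point outside `P` meets the frontier of `P`. -/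
lemma exists_frontier_dist_le {P : Set E} {a b : E} (ha : a ∈ P) (hb : b ∉ P) :
    ∃ z ∈ frontier P, dist b z ≤ dist b a := by
  have memint : ∀ (Q : Set E) (x : E), x ∈ Q → x ∉ frontier Q → x ∈ interior Q := by
    intro Q x hx hf
    have h1 : x ∈ closure Q := subset_closure hx
    rw [closure_eq_interior_union_frontier] at h1
    exact h1.resolve_right hf
  obtain ⟨z, hzseg, hz⟩ : ∃ z ∈ segment ℝ a b, z ∈ frontier P := by
    by_contra h
    push_neg at h
    have hsub : segment ℝ a b ⊆ interior P ∪ interior Pᶜ := by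
      intro x hx
      have hxf : x ∉ frontier P := h x hx
      by_cases hxP : x ∈ P
      · exact Or.inl (memint P x hxP hxf)
      · refine Or.inr (memint Pᶜ x hxP ?_)
        rwa [frontier_compl]
    have hcon := (convex_segment a b).isPreconnected
    have hu : (segment ℝ a b ∩ interior P).Nonempty :=
      ⟨a, left_mem_segment ℝ a b, memint P a ha (h a (left_mem_segment ℝ a b))⟩
    have hv : (segment ℝ a b ∩ interior Pᶜ).Nonempty := by
      refine ⟨b, right_mem_segment ℝ a b, memint Pᶜ b hb ?_⟩
      rw [frontier_compl]
      exact h b (right_mem_segment ℝ a b)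
    obtain ⟨x, -, hx1, hx2⟩ := hcon (interior P) (interior Pᶜ) isOpen_interior isOpen_interior
      hsub hu hv
    exact (interior_subset hx2) (interior_subset hx1)
  refine ⟨z, hz, ?_⟩
  have : z ∈ Metric.closedBall b (dist a b) := by
    refine (convex_closedBall b (dist a b)).segment_subset ?_ ?_ hzseg
    · exact Metric.mem_closedBall.2 le_rfl
    · exact Metric.mem_closedBall.2 (by simp [dist_nonneg])
  have hzb : dist z b ≤ dist a b := Metric.mem_closedBall.1 this
  calc dist b z = dist z b := dist_comm _ _
    _ ≤ dist a b := hzb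
    _ = dist b a := dist_comm _ _

/-- Strict monotonicity of the volume of balls in a nontrivial Euclidean space. -/
lemma volume_ball_lt_volume_ball (k : ℕ) [Nontrivial (EuclideanSpace ℝ (Fin k))] {s r : ℝ}
    (hsr : s < r) (hr : 0 < r) :
    volume (ball (0 : EuclideanSpace ℝ (Fin k)) s)
      < volume (ball (0 : EuclideanSpace ℝ (Fin k)) r) := by
  rcases le_or_gt s 0 with hs | hs
  · rw [ball_eq_empty.2 hs]
    simpa using measure_ball_pos volume (0 : EuclideanSpace ℝ (Fin k)) hr
  · set t := (s + r) / 2 with ht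
    have hts : s < t := by rw [ht]; linarith
    have htr : t < r := by rw [ht]; linarith
    have ht0 : (0 : ℝ) ≤ t := by rw [ht]; linarith
    obtain ⟨y, hy⟩ := exists_norm_eq (EuclideanSpace ℝ (Fin k)) ht0
    set δ := min (t - s) (r - t) with hδ
    have hδ0 : 0 < δ := lt_min (by linarith) (by linarith)
    have hdisj : Disjoint (ball (0 : EuclideanSpace ℝ (Fin k)) s) (ball y δ) := by
      rw [Set.disjoint_left]
      intro z hz1 hz2
      have h1 : ‖z‖ < s := mem_ball_zero_iff.1 hz1
      have h2 : dist z y < δ := mem_ball.1 hz2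
      have h3 : ‖y‖ - ‖z‖ ≤ dist z y := by
        have := norm_sub_norm_le y z
        rw [dist_comm, dist_eq_norm] at *
        linarith [this]
      have hδle : δ ≤ t - s := min_le_left _ _
      rw [hy] at h3
      linarith
    have hsub : ball (0 : EuclideanSpace ℝ (Fin k)) s ∪ ball y δ
        ⊆ ball (0 : EuclideanSpace ℝ (Fin k)) r := by
      rintro z (hz | hz)
      · have : ‖z‖ < s := mem_ball_zero_iff.1 hz
        exact mem_ball_zero_iff.2 (by linarith)
      · have h2 : dist z y < δ := mem_ball.1 hz
        have hδle : δ ≤ r - t := min_le_right _ _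
        have : ‖z‖ ≤ dist z y + ‖y‖ := by
          rw [dist_eq_norm]
          simpa using norm_add_le (z - y) y
        exact mem_ball_zero_iff.2 (by rw [hy] at this; linarith)
    have hfin : volume (ball (0 : EuclideanSpace ℝ (Fin k)) s) ≠ ⊤ :=
      (measure_ball_lt_top).ne
    calc volume (ball (0 : EuclideanSpace ℝ (Fin k)) s)
        < volume (ball (0 : EuclideanSpace ℝ (Fin k)) s) + volume (ball y δ) :=
          ENNReal.lt_add_right hfin (measure_ball_pos volume y hδ0).ne'
      _ = volume (ball (0 : EuclideanSpace ℝ (Fin k)) s ∪ ball y δ) :=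
          (measure_union hdisj measurableSet_ball).symm
      _ ≤ volume (ball (0 : EuclideanSpace ℝ (Fin k)) r) := measure_mono hsub

end Aux

/-- The supremum in the definition of `disp` is attained. -/
lemma disp_attained (k n : ℕ) (P : Set (EuclideanSpace ℝ (Fin k)))
    (hcpt : IsCompact P) (hpos : 0 < disp k n P) :
    ∃ X : Fin n → EuclideanSpace ℝ (Fin k),
      (∀ i, X i ∈ P) ∧ (∀ i, disp k n P ≤ Metric.infDist (X i) (frontier P)) ∧
        ∀ i j, i ≠ j → disp k n P ≤ dist (X i) (X j) := by
  classical
  set S := {d : ℝ | ∃ X : Fin n → EuclideanSpace ℝ (Fin k),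
    (∀ i, X i ∈ P) ∧ (∀ i, d ≤ Metric.infDist (X i) (frontier P)) ∧
      ∀ i j, i ≠ j → d ≤ dist (X i) (X j)} with hSdef
  have hdisp : disp k n P = sSup S := rfl
  have hSne : S.Nonempty := by
    by_contra h
    rw [not_nonempty_iff_eq_empty] at h
    rw [hdisp, h, Real.sSup_empty] at hpos
    exact lt_irrefl _ hpos
  have key : ∀ m : ℕ, ∃ d ∈ S, disp k n P - 1 / (m + 1) < d := by
    intro m
    refine exists_lt_of_lt_csSup hSne ?_
    rw [← hdisp]
    have : (0 : ℝ) < 1 / (m + 1) := by positivity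
    linarith
  choose d hdS hdlt using key
  have hdX : ∀ m, ∃ X : Fin n → EuclideanSpace ℝ (Fin k),
      (∀ i, X i ∈ P) ∧ (∀ i, d m ≤ Metric.infDist (X i) (frontier P)) ∧
        ∀ i j, i ≠ j → d m ≤ dist (X i) (X j) := fun m => hdS m
  choose X hXP hXb hXd using hdX
  have hPc : IsCompact (Set.pi Set.univ (fun _ : Fin n => P)) :=
    isCompact_univ_pi fun _ => hcpt
  have hXmem : ∀ m, X m ∈ Set.pi Set.univ (fun _ : Fin n => P) :=
    fun m i _ => hXP m i
  obtain ⟨Y, hYmem, φ, hφ, hYt⟩ := hPc.tendsto_subseq hXmem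
  have hY : ∀ i, Y i ∈ P := fun i => hYmem i (Set.mem_univ i)
  have htendi : ∀ i, Tendsto (fun m => X (φ m) i) atTop (𝓝 (Y i)) := by
    intro i
    exact ((continuous_apply i).tendsto Y).comp hYt
  have hlim : Tendsto (fun m : ℕ => disp k n P - 1 / ((m : ℝ) + 1)) atTop (𝓝 (disp k n P)) := by
    have := Filter.Tendsto.const_sub (disp k n P) tendsto_one_div_add_atTop_nhds_zero_nat
    simpa using this
  have hseq : ∀ m : ℕ, disp k n P - 1 / ((m : ℝ) + 1) ≤ d (φ m) := by
    intro m
    have h1 : (1 : ℝ) / ((φ m : ℝ) + 1) ≤ 1 / ((m : ℝ) + 1) := by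
      apply one_div_le_one_div_of_le
      · positivity
      · have hm : m ≤ φ m := hφ.le_apply
        have := (Nat.cast_le (α := ℝ)).2 hm
        linarith
    have := hdlt (φ m)
    linarith
  refine ⟨Y, hY, ?_, ?_⟩
  · intro i
    refine le_of_tendsto_of_tendsto' hlim
      (((continuous_infDist_pt (frontier P)).tendsto (Y i)).comp (htendi i)) ?_
    intro m
    exact le_trans (hseq m) (hXb (φ m) i)
  · intro i j hij
    have hd : Tendsto (fun m => dist (X (φ m) i) (X (φ m) j)) atTop (𝓝 (dist (Y i) (Y j))) :=
      (htendi i).dist (htendi j)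
    refine le_of_tendsto_of_tendsto' hlim hd ?_
    intro m
    exact le_trans (hseq m) (hXd (φ m) i j hij)

/-- Lemma 8: given any `n` points in a full-dimensional compact body `P ⊆ ℝᵏ`, there
is a point `p ∈ P` whose distance to each given point and to the boundary of `P`
is at least `Disp(n;P)/2`. -/
theorem exists_far_point (k n : ℕ) (P : Set (EuclideanSpace ℝ (Fin k)))
    (hcpt : IsCompact P) (hint : (interior P).Nonempty)
    (p : Fin n → EuclideanSpace ℝ (Fin k)) (hp : ∀ i, p i ∈ P) :
    ∃ q ∈ P, disp k n P / 2 ≤ Metric.infDist q (frontier P) ∧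
      ∀ i, disp k n P / 2 ≤ dist q (p i) := by
  classical
  obtain ⟨q0, hq0⟩ := hint
  rcases le_or_gt (disp k n P) 0 with hD0 | hD0
  · exact ⟨q0, interior_subset hq0,
      le_trans (by linarith) Metric.infDist_nonneg,
      fun i => le_trans (by linarith) dist_nonneg⟩
  set D := disp k n P with hDdef
  set r := D / 2 with hrdef
  have hr : 0 < r := by rw [hrdef]; linarith
  obtain ⟨Y, hY, hYb, hYd⟩ := disp_attained k n P hcpt hD0
  -- n is positive
  have hn : 0 < n := by
    rcases Nat.eq_zero_or_pos n with h | h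
    · exfalso
      subst h
      have hSuniv : {d : ℝ | ∃ X : Fin 0 → EuclideanSpace ℝ (Fin k),
          (∀ i, X i ∈ P) ∧ (∀ i, d ≤ Metric.infDist (X i) (frontier P)) ∧
            ∀ i j, i ≠ j → d ≤ dist (X i) (X j)} = Set.univ := by
        ext x
        simp only [Set.mem_setOf_eq, Set.mem_univ, iff_true]
        exact ⟨Fin.elim0, fun i => i.elim0, fun i => i.elim0, fun i => i.elim0⟩
      have : D = 0 := by
        rw [hDdef, disp, hSuniv, Real.sSup_univ]
      linarith
    · exact h
  set i0 : Fin n := ⟨0, hn⟩ with hi0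
  -- the space is nontrivial
  have hnt : Nontrivial (EuclideanSpace ℝ (Fin k)) := by
    by_contra h
    have hsub : Subsingleton (EuclideanSpace ℝ (Fin k)) :=
      not_nontrivial_iff_subsingleton.mp h
    have hintu : interior P = Set.univ := by
      apply Set.eq_univ_of_forall
      intro x
      rwa [Subsingleton.elim x q0]
    have hfr : frontier P = ∅ := by
      rw [frontier, hintu, Set.diff_univ]
    have := hYb i0
    rw [hfr, Metric.infDist_empty] at this
    linarith
  -- key claim via volume argument
  have main : ∀ ε : ℝ, 0 < ε →
      ∃ q ∈ P, r ≤ Metric.infDist q (frontier P) ∧ ∀ i, r - ε ≤ dist q (p i) := by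
    intro ε hε
    rcases le_or_gt r ε with hcase | hcase
    · refine ⟨Y i0, hY i0, ?_, fun i => ?_⟩
      · have := hYb i0; rw [hrdef]; linarith
      · have := dist_nonneg (x := Y i0) (y := p i); linarith
    · by_contra hcon
      push_neg at hcon
      set Inner := {q : EuclideanSpace ℝ (Fin k) |
        q ∈ P ∧ r ≤ Metric.infDist q (frontier P)} with hInner
      have hIball : (⋃ i, ball (Y i) r) ⊆ Inner := by
        intro q hq
        rcases Set.mem_iUnion.1 hq with ⟨i, hqi⟩
        have hqd : dist q (Y i) < r := mem_ball.1 hqi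
        have hinf : Metric.infDist (Y i) (frontier P)
            ≤ Metric.infDist q (frontier P) + dist (Y i) q :=
          Metric.infDist_le_infDist_add_dist
        have h2r : 2 * r ≤ Metric.infDist (Y i) (frontier P) := by
          have := hYb i; rw [hrdef]; linarith
        have hq1 : r < Metric.infDist q (frontier P) := by
          rw [dist_comm (Y i) q] at hinf
          linarith
        have hqP : q ∈ P := by
          by_contra hqP
          obtain ⟨z, hz, hzd⟩ := exists_frontier_dist_le (hY i) hqP
          have : Metric.infDist q (frontier P) ≤ dist q z :=
            Metric.infDist_le_dist_of_mem hz
          linarith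
        exact ⟨hqP, hq1.le⟩
      have hIcover : Inner ⊆ ⋃ i, ball (p i) (r - ε) := by
        rintro q ⟨hq1, hq2⟩
        obtain ⟨i, hi⟩ := hcon q hq1 hq2
        exact Set.mem_iUnion.2 ⟨i, mem_ball.2 hi⟩
      have hdisj : Pairwise (Function.onFun Disjoint fun i => ball (Y i) r) := by
        intro i j hij
        refine ball_disjoint_ball ?_
        have := hYd i j hij
        rw [hrdef]; linarith
      have hμY : volume (⋃ i, ball (Y i) r)
          = (n : ENNReal) * volume (ball (0 : EuclideanSpace ℝ (Fin k)) r) := by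
        rw [measure_iUnion hdisj (fun i => measurableSet_ball), tsum_fintype]
        simp only [Measure.addHaar_ball_center, Finset.sum_const, Finset.card_univ,
          Fintype.card_fin, nsmul_eq_mul]
      have hμp : volume (⋃ i, ball (p i) (r - ε))
          ≤ (n : ENNReal) * volume (ball (0 : EuclideanSpace ℝ (Fin k)) (r - ε)) := by
        refine le_trans (measure_iUnion_le _) ?_
        rw [tsum_fintype]
        refine le_of_eq ?_
        simp only [Measure.addHaar_ball_center, Finset.sum_const, Finset.card_univ,
          Fintype.card_fin, nsmul_eq_mul]
      have hlt : volume (ball (0 : EuclideanSpace ℝ (Fin k)) (r - ε))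
          < volume (ball (0 : EuclideanSpace ℝ (Fin k)) r) :=
        volume_ball_lt_volume_ball k (by linarith) hr
      have hchain : (n : ENNReal) * volume (ball (0 : EuclideanSpace ℝ (Fin k)) r)
          ≤ (n : ENNReal) * volume (ball (0 : EuclideanSpace ℝ (Fin k)) (r - ε)) := by
        rw [← hμY]
        exact le_trans (measure_mono (Set.Subset.trans hIball hIcover)) hμp
      have hmul : (n : ENNReal) * volume (ball (0 : EuclideanSpace ℝ (Fin k)) (r - ε))
          < (n : ENNReal) * volume (ball (0 : EuclideanSpace ℝ (Fin k)) r) := by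
        refine ENNReal.mul_lt_mul_right ?_ ?_ hlt
        · exact_mod_cast Nat.cast_ne_zero.2 hn.ne'
        · exact ENNReal.natCast_ne_top n
      exact absurd (lt_of_le_of_lt hchain hmul) (lt_irrefl _)
  -- nested compact sets and limit
  set K : ℕ → Set (EuclideanSpace ℝ (Fin k)) := fun m =>
    {q | q ∈ P ∧ r ≤ Metric.infDist q (frontier P) ∧
      ∀ i, r - 1 / (m + 1) ≤ dist q (p i)} with hKdef
  have hKcl : ∀ m, IsClosed (K m) := by
    intro m
    have hKeq : K m = P ∩ ((fun q => Metric.infDist q (frontier P)) ⁻¹' Set.Ici r)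
        ∩ ⋂ i, (fun q => dist q (p i)) ⁻¹' Set.Ici (r - 1 / (m + 1)) := by
      ext q
      simp only [hKdef, Set.mem_setOf_eq, Set.mem_inter_iff, Set.mem_preimage,
        Set.mem_Ici, Set.mem_iInter]
      tauto
    rw [hKeq]
    exact ((hcpt.isClosed.inter (isClosed_Ici.preimage (continuous_infDist_pt _))).inter
      (isClosed_iInter fun i => isClosed_Ici.preimage (continuous_id.dist continuous_const)))
  have hKne : ∀ m, (K m).Nonempty := by
    intro m
    obtain ⟨q, hq, h1, h2⟩ := main (1 / (m + 1)) (by positivity)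
    exact ⟨q, hq, h1, h2⟩
  have hKmono : ∀ m, K (m + 1) ⊆ K m := by
    intro m q hq
    refine ⟨hq.1, hq.2.1, fun i => ?_⟩
    have h1 : (1 : ℝ) / (m + 1 + 1) ≤ 1 / (m + 1) := by
      apply one_div_le_one_div_of_le
      · positivity
      · linarith
    have := hq.2.2 i
    push_cast at this ⊢
    linarith
  have hK0c : IsCompact (K 0) :=
    hcpt.of_isClosed_subset (hKcl 0) (fun x hx => hx.1)
  obtain ⟨q, hq⟩ := IsCompact.nonempty_iInter_of_sequence_nonempty_isCompact_isClosed
    K hKmono hKne hK0c hKcl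
  have hqm : ∀ m, q ∈ K m := Set.mem_iInter.1 hq
  refine ⟨q, (hqm 0).1, (hqm 0).2.1, ?_⟩
  intro i
  by_contra h
  push_neg at h
  obtain ⟨m, hm⟩ := exists_nat_one_div_lt (show (0 : ℝ) < r - dist q (p i) by
    rw [hrdef] at h ⊢; linarith)
  have := (hqm m).2.2 i
  rw [hrdef] at this hm
  linarith
end

section
/- Let P be a k-dimensional polytope (k ≥ 1) and let Disp(i;P) denote the optimal dispersion distance for i points in P (minimum over pairwise distances and distances to the boundary, maximized over placements). Then for every i ≥ 1, Disp(i;P) ≤ 2·Disp(2i;P). -/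
/-- A point closer to `x ∈ P` than `x` is to the frontier of `P` lies in `P`. -/
lemma mem_of_dist_lt_infDist_frontier {E : Type*} [NormedAddCommGroup E]
    [NormedSpace ℝ E] {P : Set E} {x y : E} (hx : x ∈ P)
    (h : dist y x < Metric.infDist x (frontier P)) : y ∈ P := by
  by_contra hy
  set r := Metric.infDist x (frontier P) with hr
  have hrpos : 0 < r := lt_of_le_of_lt dist_nonneg h
  have hballf : ∀ z ∈ Metric.ball x r, z ∉ frontier P := by
    intro z hz hzf
    have h1 : r ≤ dist x z := Metric.infDist_le_dist_of_mem hzf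
    rw [Metric.mem_ball, dist_comm] at hz
    exact absurd h1 (not_le.2 hz)
  have hsub : Metric.ball x r ⊆ interior P ∪ interior Pᶜ := by
    intro z hz
    have := hballf z hz
    rwa [← Set.mem_compl_iff, compl_frontier_eq_union_interior] at this
  have hxint : x ∈ interior P := by
    rcases hsub (Metric.mem_ball_self hrpos) with h1 | h1
    · exact h1
    · exact absurd hx (interior_subset h1)
  have hconn : IsPreconnected (Metric.ball x r) := (convex_ball x r).isPreconnected
  have hb : Metric.ball x r ⊆ interior P :=
    hconn.subset_left_of_subset_union isOpen_interior isOpen_interior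
      (by
        rw [Set.disjoint_iff]
        rintro z ⟨hz1, hz2⟩
        exact (interior_subset hz2) (interior_subset hz1)) hsub
      ⟨x, Metric.mem_ball_self hrpos, hxint⟩
  have hyb : y ∈ Metric.ball x r := by rwa [Metric.mem_ball]
  exact hy (interior_subset (hb hyb))

/-- Claim 9: `Disp(i;P) ≤ 2·Disp(2i;P)` for every `i ≥ 1`. -/
theorem disp_le_two_mul_disp_double (k : ℕ) (hk : 1 ≤ k)
    (P : Set (EuclideanSpace ℝ (Fin k)))
    (hcpt : IsCompact P) (hint : (interior P).Nonempty) :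
    ∀ i : ℕ, 1 ≤ i → disp k i P ≤ 2 * disp k (2 * i) P := by
  intro i hi
  obtain ⟨p0, hp0⟩ := hint
  have hp0P : p0 ∈ P := interior_subset hp0
  set S : Set ℝ := {d : ℝ | ∃ X : Fin (2 * i) → EuclideanSpace ℝ (Fin k),
    (∀ a, X a ∈ P) ∧ (∀ a, d ≤ Metric.infDist (X a) (frontier P)) ∧
      ∀ a b, a ≠ b → d ≤ dist (X a) (X b)} with hS
  have hbdd : BddAbove S := by
    obtain ⟨R, hR⟩ := hcpt.isBounded.subset_ball 0
    refine ⟨2 * R, ?_⟩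
    rintro d ⟨X, hXP, hXf, hXd⟩
    have h2i : 0 < 2 * i := by omega
    have ha := Metric.mem_ball.mp (hR (hXP ⟨0, h2i⟩))
    have hb := Metric.mem_ball.mp (hR (hXP ⟨1, by omega⟩))
    have hne : (⟨0, h2i⟩ : Fin (2 * i)) ≠ ⟨1, by omega⟩ := by
      intro h; exact absurd (congrArg Fin.val h) (by simp)
    calc d ≤ dist (X ⟨0, h2i⟩) (X ⟨1, by omega⟩) := hXd _ _ hne
      _ ≤ dist (X ⟨0, h2i⟩) 0 + dist (X ⟨1, by omega⟩) 0 := dist_triangle_right _ _ _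
      _ ≤ 2 * R := by linarith
  have h0S : (0 : ℝ) ∈ S :=
    ⟨fun _ => p0, fun _ => hp0P, fun _ => Metric.infDist_nonneg, fun a b _ => dist_nonneg⟩
  have hsup0 : 0 ≤ sSup S := le_csSup hbdd h0S
  unfold disp
  rw [← hS]
  apply Real.sSup_le
  · rintro d ⟨X, hXP, hXf, hXd⟩
    rcases le_or_gt d 0 with hd | hd
    · linarith
    set e : EuclideanSpace ℝ (Fin k) := EuclideanSpace.single ⟨0, hk⟩ (1 : ℝ) with he
    set v : EuclideanSpace ℝ (Fin k) := (d / 4) • e with hv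
    have hnv : ‖v‖ = d / 4 := by
      rw [hv, norm_smul, he, EuclideanSpace.norm_single, norm_one, mul_one,
        Real.norm_eq_abs, abs_of_pos (by linarith : (0:ℝ) < d / 4)]
    set c : Fin 2 → ℝ := fun s => if s = 0 then (1:ℝ) else -1 with hc
    have habs : ∀ s, |c s| = 1 := by intro s; fin_cases s <;> simp [hc]
    have hcnorm : ∀ s, ‖c s • v‖ = d / 4 := by
      intro s; rw [norm_smul, Real.norm_eq_abs, habs, hnv, one_mul]
    set Z : Fin 2 × Fin i → EuclideanSpace ℝ (Fin k) :=
      fun p => X p.2 + c p.1 • v with hZ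
    have hdistZX : ∀ p, dist (Z p) (X p.2) = d / 4 := by
      intro p
      rw [hZ, dist_eq_norm]
      simp only [add_sub_cancel_left]
      exact hcnorm _
    have hmem : ∀ p, Z p ∈ P := by
      intro p
      apply mem_of_dist_lt_infDist_frontier (hXP p.2)
      rw [hdistZX]
      calc d / 4 < d := by linarith
        _ ≤ _ := hXf p.2
    have hfr : ∀ p, d / 2 ≤ Metric.infDist (Z p) (frontier P) := by
      intro p
      have h1 : Metric.infDist (X p.2) (frontier P) ≤
          Metric.infDist (Z p) (frontier P) + dist (X p.2) (Z p) :=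
        Metric.infDist_le_infDist_add_dist
      rw [dist_comm, hdistZX] at h1
      have := hXf p.2
      linarith
    have hZdist : ∀ p q, p ≠ q → d / 2 ≤ dist (Z p) (Z q) := by
      rintro ⟨s, a⟩ ⟨t, b⟩ hpq
      by_cases hab : a = b
      · subst hab
        have hst : s ≠ t := fun h => hpq (by rw [h])
        have hcst : |c s - c t| = 2 := by
          rw [hc]
          fin_cases s <;> fin_cases t <;> simp_all <;> norm_num
        have : dist (Z (s, a)) (Z (t, a)) = |c s - c t| * ‖v‖ := by
          rw [hZ, dist_eq_norm]
          simp only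
          have : X a + c s • v - (X a + c t • v) = (c s - c t) • v := by
            rw [sub_smul]; abel
          rw [this, norm_smul, Real.norm_eq_abs]
        rw [this, hcst, hnv]
        linarith
      · have h1 : dist (X a) (X b) ≤
            dist (X a) (Z (s, a)) + dist (Z (s, a)) (Z (t, b)) + dist (Z (t, b)) (X b) :=
          dist_triangle4 _ _ _ _
        have e1 : dist (X a) (Z (s, a)) = d / 4 := by
          rw [dist_comm]; exact hdistZX (s, a)
        have e2 : dist (Z (t, b)) (X b) = d / 4 := hdistZX (t, b)
        rw [e1, e2] at h1
        have h2 := hXd a b hab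
        linarith
    have hdS : d / 2 ∈ S := by
      refine ⟨fun j => Z (finProdFinEquiv.symm j), fun j => hmem _, fun j => hfr _,
        fun j j' hjj' => hZdist _ _ fun h => hjj' (finProdFinEquiv.symm.injective h)⟩
    have := le_csSup hbdd hdS
    linarith
  · linarith
end
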